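/- Let Ω(x,y) = (∑ᵢ(xᵢ-yᵢ)²)^(-(n-2)/2) for x, y ∈ ℝⁿ with x ≠ y. For every multi-index α = (i₁,…,iₙ), the function x ↦ ∂^α_y Ω(x,y)|_{y=y₀} evaluated at y₀ = (1,0,…,0) has Taylor coefficient at x = 0 of the monomial x₁^{i₁}⋯xₙ^{iₙ} equal to a nonzero real number (depending on α and n). -/

import Mathlib

/-- Iterated partial derivative `∂^α = ∂^{α 0}_{x₀} ⋯ ∂^{α (n-1)}_{x_{n-1}}` of a function
on `ℝⁿ = Fin n → ℝ`, for a multi-index `α`. -/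
noncomputable def iterPderiv (n : ℕ) (α : Fin n → ℕ) (f : (Fin n → ℝ) → ℝ) :
    (Fin n → ℝ) → ℝ :=
  (List.finRange n).foldr
    (fun i g =>
      (fun h : (Fin n → ℝ) → ℝ => fun x => fderiv ℝ h x (Pi.single i 1))^[α i] g) f

namespace NKD

/-- A symbolic term `c * ∏ (z i - b i)^(e i) * (∑ (z i - b i)^2)^(-m-d)`. -/
structure Tm (n : ℕ) where
  c : ℝ
  e : Fin n → ℕ
  d : ℕ

variable {n : ℕ}

def Sq (b z : Fin n → ℝ) : ℝ := ∑ i, (z i - b i) ^ 2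

noncomputable def tsem (m : ℝ) (b : Fin n → ℝ) (τ : Tm n) (z : Fin n → ℝ) : ℝ :=
  τ.c * (∏ i, (z i - b i) ^ τ.e i) * Sq b z ^ (-m - (τ.d : ℝ))

noncomputable def lsem (m : ℝ) (b : Fin n → ℝ) (L : List (Tm n)) (z : Fin n → ℝ) : ℝ :=
  (L.map fun τ => tsem m b τ z).sum

/-- Symbolic partial derivative of a term in direction `i`. -/
def Dt (m : ℝ) (i : Fin n) (τ : Tm n) : List (Tm n) :=
  [⟨τ.c * (τ.e i : ℝ), Function.update τ.e i (τ.e i - 1), τ.d⟩,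
   ⟨2 * τ.c * (-m - (τ.d : ℝ)), Function.update τ.e i (τ.e i + 1), τ.d + 1⟩]

def Dl (m : ℝ) (i : Fin n) (L : List (Tm n)) : List (Tm n) := L.flatMap (Dt m i)

@[simp] lemma lsem_nil (m : ℝ) (b z : Fin n → ℝ) : lsem m b [] z = 0 := rfl

lemma lsem_cons (m : ℝ) (b z : Fin n → ℝ) (τ : Tm n) (L : List (Tm n)) :
    lsem m b (τ :: L) z = tsem m b τ z + lsem m b L z := rfl

lemma lsem_append (m : ℝ) (b z : Fin n → ℝ) (L₁ L₂ : List (Tm n)) :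
    lsem m b (L₁ ++ L₂) z = lsem m b L₁ z + lsem m b L₂ z := by
  unfold lsem; rw [List.map_append, List.sum_append]

lemma lsem_flatMap (m : ℝ) (b z : Fin n → ℝ) (L : List (Tm n)) (g : Tm n → List (Tm n)) :
    lsem m b (L.flatMap g) z = (L.map fun τ => lsem m b (g τ) z).sum := by
  induction L with
  | nil => simp
  | cons τ L ih => rw [List.flatMap_cons, lsem_append, ih, List.map_cons, List.sum_cons]

lemma Dl_cons (m : ℝ) (i : Fin n) (τ : Tm n) (L : List (Tm n)) :
    Dl m i (τ :: L) = Dt m i τ ++ Dl m i L := List.flatMap_cons ..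

lemma continuous_Sq (b : Fin n → ℝ) : Continuous (Sq b) := by
  unfold Sq
  exact continuous_finset_sum _ fun i _ => ((continuous_apply i).sub continuous_const).pow 2

lemma isOpen_U (b : Fin n → ℝ) : IsOpen {z : Fin n → ℝ | Sq b z ≠ 0} := by
  have : {z : Fin n → ℝ | Sq b z ≠ 0} = Sq b ⁻¹' ({0}ᶜ) := rfl
  rw [this]
  exact isOpen_compl_singleton.preimage (continuous_Sq b)

lemma differentiable_prodpow (b : Fin n → ℝ) (e : Fin n → ℕ) (s : Finset (Fin n)) :
    Differentiable ℝ (fun z : Fin n → ℝ => ∏ j ∈ s, (z j - b j) ^ e j) := by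
  classical
  induction s using Finset.induction_on with
  | empty => simpa using differentiable_const (1 : ℝ)
  | insert _ _ h ih =>
    simp only [Finset.prod_insert h]
    exact (((differentiable_apply _).sub (differentiable_const _)).pow _).mul ih

lemma differentiable_Sq (b : Fin n → ℝ) : Differentiable ℝ (Sq b) := by
  unfold Sq
  apply Differentiable.fun_sum
  intro i _
  exact ((differentiable_apply i).sub (differentiable_const _)).pow 2

lemma differentiableAt_tsem {m : ℝ} {b : Fin n → ℝ} (τ : Tm n) {z : Fin n → ℝ}
    (hz : Sq b z ≠ 0) : DifferentiableAt ℝ (tsem m b τ) z := by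
  have h1 : DifferentiableAt ℝ (fun z : Fin n → ℝ => τ.c * ∏ j, (z j - b j) ^ τ.e j) z :=
    ((differentiable_prodpow b τ.e Finset.univ) z).const_mul τ.c
  have h2 : DifferentiableAt ℝ (fun z => Sq b z ^ (-m - (τ.d : ℝ))) z :=
    ((differentiable_Sq b) z).rpow_const (Or.inl hz)
  exact h1.mul h2

lemma differentiableAt_lsem {m : ℝ} {b : Fin n → ℝ} (L : List (Tm n)) {z : Fin n → ℝ}
    (hz : Sq b z ≠ 0) : DifferentiableAt ℝ (lsem m b L) z := by
  induction L with
  | nil => exact differentiableAt_const 0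
  | cons τ L ih =>
    have : lsem m b (τ :: L) = fun z => tsem m b τ z + lsem m b L z := rfl
    rw [this]
    exact (differentiableAt_tsem τ hz).add ih

lemma tsem_update (m : ℝ) (b : Fin n → ℝ) (τ : Tm n) (z : Fin n → ℝ) (i : Fin n) (t : ℝ) :
    tsem m b τ (Function.update z i t) =
      τ.c * ((t - b i) ^ τ.e i * ∏ j ∈ Finset.univ.erase i, (z j - b j) ^ τ.e j) *
        ((t - b i) ^ 2 + ∑ j ∈ Finset.univ.erase i, (z j - b j) ^ 2) ^ (-m - (τ.d : ℝ)) := by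
  unfold tsem Sq
  congr 2
  · rw [← Finset.mul_prod_erase Finset.univ _ (Finset.mem_univ i), Function.update_self]
    congr 1
    exact Finset.prod_congr rfl fun j hj => by
      rw [Function.update_of_ne (Finset.ne_of_mem_erase hj)]
  · rw [← Finset.add_sum_erase Finset.univ _ (Finset.mem_univ i), Function.update_self]
    congr 1
    exact Finset.sum_congr rfl fun j hj => by
      rw [Function.update_of_ne (Finset.ne_of_mem_erase hj)]

lemma prod_update_pow (w : Fin n → ℝ) (e : Fin n → ℕ) (i : Fin n) (k : ℕ) :
    ∏ j, w j ^ (Function.update e i k j) =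
      w i ^ k * ∏ j ∈ Finset.univ.erase i, w j ^ e j := by
  rw [← Finset.mul_prod_erase Finset.univ _ (Finset.mem_univ i), Function.update_self]
  congr 1
  exact Finset.prod_congr rfl fun j hj => by
    rw [Function.update_of_ne (Finset.ne_of_mem_erase hj)]

lemma hasDerivAt_tsem_slice (m : ℝ) (b : Fin n → ℝ) (τ : Tm n) (i : Fin n) (z : Fin n → ℝ)
    (hz : Sq b z ≠ 0) :
    HasDerivAt (fun t => tsem m b τ (Function.update z i t)) (lsem m b (Dt m i τ) z) (z i) := by
  set P := ∏ j ∈ Finset.univ.erase i, (z j - b j) ^ τ.e j with hP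
  set Q := ∑ j ∈ Finset.univ.erase i, (z j - b j) ^ 2 with hQ
  have hSq : Sq b z = (z i - b i) ^ 2 + Q := by
    rw [hQ]
    unfold Sq
    rw [← Finset.add_sum_erase Finset.univ _ (Finset.mem_univ i)]
  have hne : (z i - b i) ^ 2 + Q ≠ 0 := hSq ▸ hz
  have h1 : HasDerivAt (fun t : ℝ => t - b i) 1 (z i) := (hasDerivAt_id _).sub_const _
  have h2 : HasDerivAt (fun t : ℝ => (t - b i) ^ τ.e i)
      ((τ.e i : ℝ) * (z i - b i) ^ (τ.e i - 1) * 1) (z i) := h1.pow _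
  have h3 : HasDerivAt (fun t : ℝ => (t - b i) ^ 2 + Q)
      ((2 : ℝ) * (z i - b i) ^ (2 - 1) * 1) (z i) := (h1.pow 2).add_const _
  have h4 := h3.rpow_const (p := -m - (τ.d : ℝ)) (Or.inl hne)
  have h6 := ((h2.mul_const P).mul h4).const_mul τ.c
  have hfun : (fun t => tsem m b τ (Function.update z i t)) =
      fun t => τ.c * ((t - b i) ^ τ.e i * P * ((t - b i) ^ 2 + Q) ^ (-m - (τ.d : ℝ))) := by
    funext t
    rw [tsem_update]
    ring
  rw [hfun]
  refine h6.congr_deriv ?_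
  symm
  unfold lsem Dt tsem
  simp only [List.map_cons, List.map_nil, List.sum_cons, List.sum_nil]
  rw [prod_update_pow, prod_update_pow, ← hP, hSq]
  have hexp : -m - ((τ.d + 1 : ℕ) : ℝ) = -m - (τ.d : ℝ) - 1 := by push_cast; ring
  rw [hexp]
  rw [pow_succ]
  ring

lemma hasDerivAt_update (z : Fin n → ℝ) (i : Fin n) (t₀ : ℝ) :
    HasDerivAt (fun t => Function.update z i t) (Pi.single i (1 : ℝ)) t₀ := by
  have hrw : (fun t : ℝ => Function.update z i t) =
      fun t => z + (t - z i) • (Pi.single i (1 : ℝ) : Fin n → ℝ) := by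
    funext t
    funext j
    by_cases h : j = i
    · subst h
      simp
    · simp [Function.update_of_ne h, Pi.single_eq_of_ne h]
  rw [hrw]
  have := (((hasDerivAt_id t₀).sub_const (z i)).smul_const (Pi.single i (1 : ℝ) : Fin n → ℝ)).const_add z
  simpa using this

lemma fderiv_tsem_apply {m : ℝ} {b : Fin n → ℝ} (τ : Tm n) (i : Fin n) {z : Fin n → ℝ}
    (hz : Sq b z ≠ 0) :
    fderiv ℝ (tsem m b τ) z (Pi.single i 1) = lsem m b (Dt m i τ) z := by
  have hd := differentiableAt_tsem (m := m) τ hz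
  have hf : HasFDerivAt (tsem m b τ) (fderiv ℝ (tsem m b τ) z)
      (Function.update z i (z i)) := by
    rw [Function.update_eq_self]
    exact hd.hasFDerivAt
  have hcomp := hf.comp_hasDerivAt (z i) (hasDerivAt_update z i (z i))
  have hslice := hasDerivAt_tsem_slice m b τ i z hz
  have : HasDerivAt (fun t => tsem m b τ (Function.update z i t))
      (fderiv ℝ (tsem m b τ) z (Pi.single i 1)) (z i) := by
    exact hcomp
  exact this.unique hslice

lemma fderiv_lsem_apply {m : ℝ} {b : Fin n → ℝ} (L : List (Tm n)) (i : Fin n) {z : Fin n → ℝ}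
    (hz : Sq b z ≠ 0) :
    fderiv ℝ (lsem m b L) z (Pi.single i 1) = lsem m b (Dl m i L) z := by
  induction L with
  | nil =>
    have : lsem m b ([] : List (Tm n)) = fun _ => (0 : ℝ) := rfl
    rw [this, fderiv_fun_const]
    simp [Dl]
  | cons τ L ih =>
    have hcons : lsem m b (τ :: L) = fun z => tsem m b τ z + lsem m b L z := rfl
    rw [hcons, fderiv_fun_add (differentiableAt_tsem τ hz) (differentiableAt_lsem L hz),
      ContinuousLinearMap.add_apply, fderiv_tsem_apply τ i hz, ih, Dl_cons, lsem_append]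

/-! ### Representation machinery -/

lemma rep_Dl {m : ℝ} {b : Fin n → ℝ} {f : (Fin n → ℝ) → ℝ} {L : List (Tm n)} (i : Fin n)
    (h : ∀ z, Sq b z ≠ 0 → f z = lsem m b L z) :
    ∀ z, Sq b z ≠ 0 → fderiv ℝ f z (Pi.single i 1) = lsem m b (Dl m i L) z := by
  intro z hz
  have hev : f =ᶠ[nhds z] lsem m b L :=
    Filter.eventuallyEq_of_mem ((isOpen_U b).mem_nhds hz) h
  rw [hev.fderiv_eq, fderiv_lsem_apply L i hz]

lemma rep_iter {m : ℝ} {b : Fin n → ℝ} (i : Fin n) (k : ℕ)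
    {f : (Fin n → ℝ) → ℝ} {L : List (Tm n)}
    (h : ∀ z, Sq b z ≠ 0 → f z = lsem m b L z) :
    ∀ z, Sq b z ≠ 0 →
      ((fun h : (Fin n → ℝ) → ℝ => fun x => fderiv ℝ h x (Pi.single i 1))^[k] f) z
        = lsem m b ((Dl m i)^[k] L) z := by
  induction k generalizing f L with
  | zero => exact h
  | succ k ih =>
    intro z hz
    rw [Function.iterate_succ_apply', Function.iterate_succ_apply']
    exact rep_Dl i (ih h) z hz

lemma rep_foldr {m : ℝ} {b : Fin n → ℝ} (α : Fin n → ℕ) (l : List (Fin n))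
    {f : (Fin n → ℝ) → ℝ} {L : List (Tm n)}
    (h : ∀ z, Sq b z ≠ 0 → f z = lsem m b L z) :
    ∀ z, Sq b z ≠ 0 →
      (l.foldr (fun i g =>
        (fun h : (Fin n → ℝ) → ℝ => fun x => fderiv ℝ h x (Pi.single i 1))^[α i] g) f) z
      = lsem m b (l.foldr (fun i acc => (Dl m i)^[α i] acc) L) z := by
  induction l generalizing f L with
  | nil => exact h
  | cons a l ih =>
    intro z hz
    exact rep_iter a (α a) (ih h) z hz

def applyIter (m : ℝ) (α : Fin n → ℕ) (L : List (Tm n)) : List (Tm n) :=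
  (List.finRange n).foldr (fun i acc => (Dl m i)^[α i] acc) L

lemma rep_iterPderiv {m : ℝ} {b : Fin n → ℝ} (α : Fin n → ℕ)
    {f : (Fin n → ℝ) → ℝ} {L : List (Tm n)}
    (h : ∀ z, Sq b z ≠ 0 → f z = lsem m b L z) :
    ∀ z, Sq b z ≠ 0 → iterPderiv n α f z = lsem m b (applyIter m α L) z := by
  unfold iterPderiv applyIter
  exact rep_foldr α (List.finRange n) h

/-! ### Words -/

def applyWord (m : ℝ) (w : List (Fin n)) (L : List (Tm n)) : List (Tm n) :=
  w.foldr (fun i acc => Dl m i acc) L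

def wordOf (α : Fin n → ℕ) : List (Fin n) :=
  (List.finRange n).flatMap fun i => List.replicate (α i) i

@[simp] lemma applyWord_nil (m : ℝ) (L : List (Tm n)) : applyWord m [] L = L := rfl

lemma applyWord_cons (m : ℝ) (a : Fin n) (w : List (Fin n)) (L : List (Tm n)) :
    applyWord m (a :: w) L = Dl m a (applyWord m w L) := rfl

lemma applyWord_append (m : ℝ) (w₁ w₂ : List (Fin n)) (L : List (Tm n)) :
    applyWord m (w₁ ++ w₂) L = applyWord m w₁ (applyWord m w₂ L) :=
  List.foldr_append ..

lemma applyWord_replicate (m : ℝ) (k : ℕ) (i : Fin n) (L : List (Tm n)) :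
    applyWord m (List.replicate k i) L = (Dl m i)^[k] L := by
  induction k with
  | zero => rfl
  | succ k ih =>
    rw [List.replicate_succ, applyWord_cons, ih]
    exact (Function.iterate_succ_apply' (Dl m i) k L).symm

lemma applyIter_eq_applyWord (m : ℝ) (α : Fin n → ℕ) (L : List (Tm n)) :
    applyIter m α L = applyWord m (wordOf α) L := by
  unfold applyIter wordOf
  induction List.finRange n with
  | nil => rfl
  | cons a l ih =>
    rw [List.foldr_cons, List.flatMap_cons, applyWord_append, applyWord_replicate, ih]

/-! ### Commutation of symbolic derivatives -/

lemma lsem_swap_single (m : ℝ) (b : Fin n → ℝ) (i j : Fin n) (τ : Tm n) (z : Fin n → ℝ) :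
    lsem m b (Dl m i (Dl m j [τ])) z = lsem m b (Dl m j (Dl m i [τ])) z := by
  rcases eq_or_ne i j with rfl | hij
  · rfl
  obtain ⟨c, e, d⟩ := τ
  simp only [Dl, Dt, List.flatMap_cons, List.flatMap_nil, List.append_nil]
  simp only [Function.update_of_ne hij, Function.update_of_ne hij.symm, Function.update_self,
    List.flatMap_cons, List.flatMap_nil, List.append_nil, List.cons_append, List.nil_append]
  rw [Function.update_comm hij.symm, Function.update_comm hij.symm, Function.update_comm hij.symm,
    Function.update_comm hij.symm]
  simp only [lsem, tsem, List.map_cons, List.map_nil, List.sum_cons, List.sum_nil]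
  push_cast
  ring

lemma lsem_Dl_congr {m : ℝ} {b : Fin n → ℝ} (i : Fin n) {L₁ L₂ : List (Tm n)}
    (h : ∀ z, Sq b z ≠ 0 → lsem m b L₁ z = lsem m b L₂ z) :
    ∀ z, Sq b z ≠ 0 → lsem m b (Dl m i L₁) z = lsem m b (Dl m i L₂) z := by
  intro z hz
  rw [← fderiv_lsem_apply L₁ i hz, ← fderiv_lsem_apply L₂ i hz]
  have hev : lsem m b L₁ =ᶠ[nhds z] lsem m b L₂ :=
    Filter.eventuallyEq_of_mem ((isOpen_U b).mem_nhds hz) h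
  rw [hev.fderiv_eq]

lemma Dl_Dl_eq_flatMap (m : ℝ) (i j : Fin n) (L : List (Tm n)) :
    Dl m i (Dl m j L) = L.flatMap fun τ => Dl m i (Dl m j [τ]) := by
  unfold Dl
  rw [List.flatMap_assoc]
  simp [List.flatMap_cons]

lemma lsem_swap (m : ℝ) (b : Fin n → ℝ) (i j : Fin n) (L : List (Tm n)) (z : Fin n → ℝ) :
    lsem m b (Dl m i (Dl m j L)) z = lsem m b (Dl m j (Dl m i L)) z := by
  rw [Dl_Dl_eq_flatMap, Dl_Dl_eq_flatMap, lsem_flatMap, lsem_flatMap]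
  congr 1
  apply List.map_congr_left
  intro τ _
  exact lsem_swap_single m b i j τ z

lemma lsem_applyWord_perm (m : ℝ) (b : Fin n → ℝ) (L : List (Tm n)) {w₁ w₂ : List (Fin n)}
    (hp : w₁.Perm w₂) :
    ∀ z, Sq b z ≠ 0 → lsem m b (applyWord m w₁ L) z = lsem m b (applyWord m w₂ L) z := by
  induction hp with
  | nil => intro z _; rfl
  | cons x h ih =>
    rw [applyWord_cons, applyWord_cons]
    exact lsem_Dl_congr x ih
  | swap x y l =>
    intro z hz
    rw [applyWord_cons, applyWord_cons, applyWord_cons, applyWord_cons]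
    exact lsem_swap m b y x (applyWord m l L) z
  | trans h₁ h₂ ih₁ ih₂ =>
    intro z hz
    rw [ih₁ z hz, ih₂ z hz]

lemma count_wordOf (α : Fin n → ℕ) (j : Fin n) : (wordOf α).count j = α j := by
  unfold wordOf
  have key : ∀ l : List (Fin n),
      ((l.flatMap fun i => List.replicate (α i) i).count j)
        = ((l.map fun i => if i = j then α i else 0).sum) := by
    intro l
    induction l with
    | nil => simp
    | cons a l ih =>
      rw [List.flatMap_cons, List.count_append, ih, List.map_cons, List.sum_cons]
      congr 1
      rw [List.count_replicate]
      simp [beq_iff_eq]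
  rw [key]
  have := Fin.sum_univ_def (fun i => if i = j then α i else 0)
  rw [← this]
  simp [Finset.sum_ite_eq']

/-! ### Flip and scale -/

def flipT (τ : Tm n) : Tm n := ⟨τ.c * ∏ j, (-1 : ℝ) ^ τ.e j, τ.e, τ.d⟩
def scaleT (s : ℝ) (τ : Tm n) : Tm n := ⟨s * τ.c, τ.e, τ.d⟩
def flipL (L : List (Tm n)) : List (Tm n) := L.map flipT
def scaleL (s : ℝ) (L : List (Tm n)) : List (Tm n) := L.map (scaleT s)

lemma prod_neg_one_update (e : Fin n → ℕ) (i : Fin n) (k : ℕ) :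
    ∏ j, (-1 : ℝ) ^ (Function.update e i k j)
      = (-1 : ℝ) ^ k * ∏ j ∈ Finset.univ.erase i, (-1 : ℝ) ^ e j :=
  prod_update_pow _ e i k

lemma prod_neg_one_split (e : Fin n → ℕ) (i : Fin n) :
    ∏ j, (-1 : ℝ) ^ e j = (-1 : ℝ) ^ e i * ∏ j ∈ Finset.univ.erase i, (-1 : ℝ) ^ e j :=
  (Finset.mul_prod_erase Finset.univ _ (Finset.mem_univ i)).symm

lemma Dt_flip (m : ℝ) (i : Fin n) (τ : Tm n) :
    Dt m i (flipT τ) = flipL (scaleL (-1) (Dt m i τ)) := by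
  obtain ⟨c, e, d⟩ := τ
  simp only [Dt, flipT, flipL, scaleL, scaleT, List.map_cons, List.map_nil, Tm.mk.injEq,
    List.cons.injEq, and_true, List.cons_ne_nil]
  constructor
  · rw [prod_neg_one_update, prod_neg_one_split e i]
    rcases Nat.eq_zero_or_eq_succ_pred (e i) with h | h
    · rw [h]; push_cast; ring
    · rw [h]
      simp only [Nat.add_sub_cancel, Nat.succ_sub_one]
      rw [pow_succ]
      push_cast
      ring
  · rw [prod_neg_one_update, prod_neg_one_split e i, pow_succ]
    ring

lemma Dt_scale (m : ℝ) (i : Fin n) (s : ℝ) (τ : Tm n) :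
    Dt m i (scaleT s τ) = scaleL s (Dt m i τ) := by
  obtain ⟨c, e, d⟩ := τ
  simp only [Dt, scaleT, scaleL, List.map_cons, List.map_nil, Tm.mk.injEq,
    List.cons.injEq, and_true]
  constructor <;> ring_nf <;> try exact ⟨by ring, rfl, rfl⟩


lemma Dl_flip (m : ℝ) (i : Fin n) (L : List (Tm n)) :
    Dl m i (flipL L) = flipL (scaleL (-1) (Dl m i L)) := by
  unfold Dl flipL scaleL
  rw [List.flatMap_map, List.map_flatMap, List.map_flatMap]
  apply List.flatMap_congr
  intro τ _
  have := Dt_flip m i τ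
  unfold flipL scaleL at this
  rw [this]

lemma Dl_scale (m : ℝ) (i : Fin n) (s : ℝ) (L : List (Tm n)) :
    Dl m i (scaleL s L) = scaleL s (Dl m i L) := by
  unfold Dl scaleL
  rw [List.flatMap_map, List.map_flatMap]
  apply List.flatMap_congr
  intro τ _
  have := Dt_scale m i s τ
  unfold scaleL at this
  rw [this]

lemma scaleL_scaleL (a b : ℝ) (L : List (Tm n)) :
    scaleL a (scaleL b L) = scaleL (a * b) L := by
  unfold scaleL
  rw [List.map_map]
  apply List.map_congr_left
  intro τ _
  simp only [Function.comp_apply, scaleT, Tm.mk.injEq, and_true]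
  ring

lemma scaleL_one (L : List (Tm n)) : scaleL 1 L = L := by
  unfold scaleL
  have h : ∀ τ : Tm n, scaleT 1 τ = τ := by
    intro τ
    obtain ⟨c, e, d⟩ := τ
    simp [scaleT]
  rw [List.map_congr_left fun τ _ => h τ]
  exact List.map_id L

lemma applyWord_flip (m : ℝ) (w : List (Fin n)) (L : List (Tm n)) :
    applyWord m w (flipL L) = flipL (scaleL ((-1) ^ w.length) (applyWord m w L)) := by
  induction w with
  | nil => simp [scaleL_one]
  | cons a w ih =>
    rw [applyWord_cons, ih, Dl_flip, Dl_scale, scaleL_scaleL, applyWord_cons,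
      List.length_cons]
    rw [show ((-1 : ℝ)) ^ (w.length + 1) = -1 * (-1) ^ w.length from by rw [pow_succ]; ring]

lemma lsem_scaleL (m : ℝ) (b z : Fin n → ℝ) (s : ℝ) (L : List (Tm n)) :
    lsem m b (scaleL s L) z = s * lsem m b L z := by
  induction L with
  | nil => simp [scaleL]
  | cons τ L ih =>
    have h1 : scaleL s (τ :: L) = scaleT s τ :: scaleL s L := rfl
    rw [h1, lsem_cons, lsem_cons, ih]
    have h2 : tsem m b (scaleT s τ) z = s * tsem m b τ z := by
      unfold tsem scaleT
      ring
    rw [h2]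
    ring

lemma lsem_flip_swapbase (m : ℝ) (b z : Fin n → ℝ) (L : List (Tm n)) :
    lsem m b (flipL L) z = lsem m z L b := by
  induction L with
  | nil => simp [flipL]
  | cons τ L ih =>
    have h1 : flipL (τ :: L) = flipT τ :: flipL L := rfl
    rw [h1, lsem_cons, lsem_cons, ih]
    congr 1
    unfold tsem flipT Sq
    have hSq : ∑ j, (z j - b j) ^ 2 = ∑ j, (b j - z j) ^ 2 :=
      Finset.sum_congr rfl fun j _ => by ring
    have hprod : ∏ j, (b j - z j) ^ τ.e j
        = (∏ j, (-1 : ℝ) ^ τ.e j) * ∏ j, (z j - b j) ^ τ.e j := by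
      rw [← Finset.prod_mul_distrib]
      exact Finset.prod_congr rfl fun j _ => by
        rw [show b j - z j = -(z j - b j) by ring, neg_pow]
    rw [hSq, hprod]
    ring

/-! ### Invariants of the symbolic lists -/

lemma mem_Dl {m : ℝ} {i : Fin n} {L : List (Tm n)} {τ' : Tm n} :
    τ' ∈ Dl m i L ↔ ∃ τ ∈ L, τ' ∈ Dt m i τ := List.mem_flatMap

/-- The distinguished coordinate never appears in exponents if no derivative hits it. -/
lemma e_zero_applyWord {m : ℝ} (i₀ : Fin n) (w : List (Fin n)) (hw : ∀ j ∈ w, j ≠ i₀)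
    {L : List (Tm n)} (hL : ∀ τ ∈ L, τ.e i₀ = 0) :
    ∀ τ ∈ applyWord m w L, τ.e i₀ = 0 := by
  induction w with
  | nil => exact hL
  | cons a w ih =>
    intro τ hτ
    rw [applyWord_cons] at hτ
    obtain ⟨σ, hσ, hmem⟩ := mem_Dl.mp hτ
    have hσ0 : σ.e i₀ = 0 := ih (fun j hj => hw j (List.mem_cons_of_mem a hj)) σ hσ
    have ha : a ≠ i₀ := hw a List.mem_cons_self
    simp only [Dt, List.mem_cons, List.mem_singleton] at hmem
    rcases hmem with rfl | rfl | h
    · simpa [Function.update_of_ne (Ne.symm ha)] using hσ0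
    · simpa [Function.update_of_ne (Ne.symm ha)] using hσ0
    · simp at h

/-- Balance invariant: `2 d = |e| + number of derivatives applied`. -/
def Bal (K : ℕ) (L : List (Tm n)) : Prop :=
  ∀ τ ∈ L, τ.c ≠ 0 → 2 * τ.d = (∑ i, τ.e i) + K

lemma sum_update_add (e : Fin n → ℕ) (i : Fin n) :
    ∑ j, Function.update e i (e i + 1) j = (∑ j, e j) + 1 := by
  rw [Finset.sum_update_of_mem (Finset.mem_univ i),
    ← Finset.add_sum_erase Finset.univ e (Finset.mem_univ i), Finset.erase_eq]
  omega

lemma sum_update_sub (e : Fin n → ℕ) (i : Fin n) (h : e i ≠ 0) :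
    (∑ j, Function.update e i (e i - 1) j) + 1 = ∑ j, e j := by
  rw [Finset.sum_update_of_mem (Finset.mem_univ i),
    ← Finset.add_sum_erase Finset.univ e (Finset.mem_univ i), Finset.erase_eq]
  omega

lemma Bal_Dl {m : ℝ} {K : ℕ} {L : List (Tm n)} (i : Fin n) (h : Bal K L) :
    Bal (K + 1) (Dl m i L) := by
  intro τ' hτ' hc'
  obtain ⟨τ, hτ, hmem⟩ := mem_Dl.mp hτ'
  simp only [Dt, List.mem_cons, List.mem_singleton] at hmem
  rcases hmem with rfl | rfl | hmem
  · simp only at hc' ⊢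
    have hc : τ.c ≠ 0 := fun h0 => hc' (by rw [h0]; ring)
    have he : τ.e i ≠ 0 := by
      intro h0
      exact hc' (by rw [h0]; simp)
    have hbal := h τ hτ hc
    have := sum_update_sub τ.e i he
    omega
  · simp only at hc' ⊢
    have hc : τ.c ≠ 0 := fun h0 => hc' (by rw [h0]; ring)
    have hbal := h τ hτ hc
    have := sum_update_add τ.e i
    omega
  · simp at hmem

lemma Bal_applyWord {m : ℝ} {K : ℕ} {L : List (Tm n)} (w : List (Fin n)) (h : Bal K L) :
    Bal (K + w.length) (applyWord m w L) := by
  induction w with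
  | nil => exact h
  | cons a w ih =>
    rw [applyWord_cons]
    have := Bal_Dl (m := m) a ih
    simpa [List.length_cons, Nat.add_assoc] using this

/-- Sign invariant: `(-1)^d * c ≥ 0`. -/
def Sgn (L : List (Tm n)) : Prop := ∀ τ ∈ L, 0 ≤ (-1 : ℝ) ^ τ.d * τ.c

lemma Sgn_Dl {m : ℝ} (hm : 0 < m) {L : List (Tm n)} (i : Fin n) (h : Sgn L) :
    Sgn (Dl m i L) := by
  intro τ' hτ'
  obtain ⟨τ, hτ, hmem⟩ := mem_Dl.mp hτ'
  have hτs := h τ hτ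
  simp only [Dt, List.mem_cons, List.mem_singleton] at hmem
  rcases hmem with rfl | rfl | hmem
  · simp only
    have : (-1 : ℝ) ^ τ.d * (τ.c * (τ.e i : ℝ)) = (τ.e i : ℝ) * ((-1) ^ τ.d * τ.c) := by ring
    rw [this]
    exact mul_nonneg (Nat.cast_nonneg _) hτs
  · simp only
    have : (-1 : ℝ) ^ (τ.d + 1) * (2 * τ.c * (-m - (τ.d : ℝ)))
        = (2 * (m + (τ.d : ℝ))) * ((-1) ^ τ.d * τ.c) := by
      rw [pow_succ]; ring
    rw [this]
    have hpos : (0 : ℝ) ≤ 2 * (m + (τ.d : ℝ)) := by positivity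
    exact mul_nonneg hpos hτs
  · simp at hmem

lemma Sgn_applyWord {m : ℝ} (hm : 0 < m) {L : List (Tm n)} (w : List (Fin n)) (h : Sgn L) :
    Sgn (applyWord m w L) := by
  induction w with
  | nil => exact h
  | cons a w ih => exact Sgn_Dl hm a ih

/-- Survivor invariant: there is a nonzero term with zero exponent vector. -/
def Surv (L : List (Tm n)) : Prop := ∃ τ ∈ L, τ.c ≠ 0 ∧ τ.e = fun _ => 0

lemma Surv_two {m : ℝ} (hm : 0 < m) {L : List (Tm n)} (i : Fin n) (h : Surv L) :
    Surv (Dl m i (Dl m i L)) := by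
  obtain ⟨τ, hτ, hc, he⟩ := h
  have hei : τ.e i = 0 := by rw [he]
  set u : Tm n := ⟨2 * τ.c * (-m - (τ.d : ℝ)), Function.update τ.e i (τ.e i + 1), τ.d + 1⟩
    with hu
  have hmem_u : u ∈ Dl m i L := mem_Dl.mpr ⟨τ, hτ, by simp [Dt, hu]⟩
  refine ⟨⟨u.c * (u.e i : ℝ), Function.update u.e i (u.e i - 1), u.d⟩,
    mem_Dl.mpr ⟨u, hmem_u, by simp [Dt]⟩, ?_, ?_⟩
  · have h1 : u.e i = 1 := by simp [hu, hei]
    rw [h1]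
    simp only [Nat.cast_one, mul_one]
    have hmd : -m - (τ.d : ℝ) ≠ 0 := by
      have : (0 : ℝ) < m + (τ.d : ℝ) := by positivity
      intro h0
      nlinarith
    exact mul_ne_zero (mul_ne_zero two_ne_zero hc) hmd
  · have h1 : u.e i = 1 := by simp [hu, hei]
    rw [h1]
    show Function.update u.e i 0 = fun _ => 0
    have : u.e = Function.update τ.e i 1 := by simp [hu, hei]
    rw [this, Function.update_idem, ← hei, Function.update_eq_self, he]

lemma Surv_iter {m : ℝ} (hm : 0 < m) {L : List (Tm n)} (i : Fin n) (k : ℕ) (h : Surv L) :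
    Surv ((Dl m i)^[2 * k] L) := by
  induction k generalizing L with
  | zero => exact h
  | succ k ih =>
    have h2 : (Dl m i)^[2] L = Dl m i (Dl m i L) := by
      rw [Function.iterate_succ_apply', Function.iterate_succ_apply',
        Function.iterate_zero_apply]
    have hrw : 2 * (k + 1) = 2 * k + 2 := by ring
    rw [hrw, Function.iterate_add_apply, h2]
    exact ih (Surv_two hm i h)

lemma Surv_blocks {m : ℝ} (hm : 0 < m) (γ : Fin n → ℕ) (l : List (Fin n))
    {L : List (Tm n)} (h : Surv L) :
    Surv (l.foldr (fun i acc => (Dl m i)^[2 * γ i] acc) L) := by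
  induction l with
  | nil => exact h
  | cons a l ih => exact Surv_iter hm a (γ a) ih

/-! ### Slice along the distinguished axis -/

section Slice

variable (i₀ : Fin n)

lemma Sq_zeta (t : ℝ) :
    Sq (0 : Fin n → ℝ) (t • (Pi.single i₀ (1 : ℝ) : Fin n → ℝ)) = t ^ 2 := by
  unfold Sq
  rw [Finset.sum_eq_single i₀]
  · simp
  · intro j _ hj
    simp [Pi.single_eq_of_ne hj]
  · simp

lemma Sq_zero_single : Sq (0 : Fin n → ℝ) (Pi.single i₀ (1 : ℝ) : Fin n → ℝ) = 1 := by
  have := Sq_zeta i₀ 1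
  rw [one_smul] at this
  rw [this]
  norm_num

lemma tsem_single (m : ℝ) (τ : Tm n) (h0 : τ.e i₀ = 0) :
    tsem m 0 τ (Pi.single i₀ (1 : ℝ) : Fin n → ℝ)
      = τ.c * ∏ j, ((Pi.single i₀ (1 : ℝ) : Fin n → ℝ) j) ^ τ.e j := by
  unfold tsem
  rw [Sq_zero_single, Real.one_rpow, mul_one]
  congr 1
  exact Finset.prod_congr rfl fun j _ => by simp

lemma tsem_zeta (m : ℝ) (τ : Tm n) (dbar : ℕ) (h0 : τ.e i₀ = 0)
    (hd : τ.c ≠ 0 → (∀ j, τ.e j = 0) → τ.d = dbar) (t : ℝ) :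
    tsem m 0 τ (t • (Pi.single i₀ (1 : ℝ) : Fin n → ℝ))
      = tsem m 0 τ (Pi.single i₀ (1 : ℝ) : Fin n → ℝ) * (t ^ 2) ^ (-m - (dbar : ℝ)) := by
  classical
  have hsub : ∀ j, (t • (Pi.single i₀ (1 : ℝ) : Fin n → ℝ)) j - (0 : Fin n → ℝ) j
      = t * (Pi.single i₀ (1 : ℝ) : Fin n → ℝ) j := by
    intro j; simp
  by_cases hE : ∀ j, τ.e j = 0
  · by_cases hc : τ.c = 0
    · unfold tsem
      rw [hc]
      ring
    · have hdd : τ.d = dbar := hd hc hE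
      unfold tsem
      rw [Sq_zeta, Sq_zero_single, Real.one_rpow, hdd]
      have h1 : ∀ (w : Fin n → ℝ), ∏ j, (w j - (0 : Fin n → ℝ) j) ^ τ.e j = 1 := by
        intro w
        apply Finset.prod_eq_one
        intro j _
        rw [hE j, pow_zero]
      rw [h1, h1]
      ring
  · push_neg at hE
    obtain ⟨j, hj⟩ := hE
    have hji : j ≠ i₀ := fun h => hj (h ▸ h0)
    have hz : ∀ (s : ℝ), ∏ k, ((s • (Pi.single i₀ (1 : ℝ) : Fin n → ℝ)) k - (0 : Fin n → ℝ) k) ^ τ.e k = 0 := by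
      intro s
      apply Finset.prod_eq_zero (Finset.mem_univ j)
      rw [show (s • (Pi.single i₀ (1 : ℝ) : Fin n → ℝ)) j - (0 : Fin n → ℝ) j
          = s * (Pi.single i₀ (1 : ℝ) : Fin n → ℝ) j by simp]
      rw [Pi.single_eq_of_ne hji]
      rw [mul_zero]
      exact zero_pow hj
    have hz1 : ∏ k, ((Pi.single i₀ (1 : ℝ) : Fin n → ℝ) k - (0 : Fin n → ℝ) k) ^ τ.e k = 0 := by
      apply Finset.prod_eq_zero (Finset.mem_univ j)
      rw [show (Pi.single i₀ (1 : ℝ) : Fin n → ℝ) j - (0 : Fin n → ℝ) j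
          = (Pi.single i₀ (1 : ℝ) : Fin n → ℝ) j by simp]
      rw [Pi.single_eq_of_ne hji]
      exact zero_pow hj
    unfold tsem
    rw [hz, hz1]
    ring

lemma lsem_zeta (m : ℝ) (M : List (Tm n)) (dbar : ℕ) (h0 : ∀ τ ∈ M, τ.e i₀ = 0)
    (hd : ∀ τ ∈ M, τ.c ≠ 0 → (∀ j, τ.e j = 0) → τ.d = dbar) (t : ℝ) :
    lsem m 0 M (t • (Pi.single i₀ (1 : ℝ) : Fin n → ℝ))
      = lsem m 0 M (Pi.single i₀ (1 : ℝ) : Fin n → ℝ) * (t ^ 2) ^ (-m - (dbar : ℝ)) := by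
  induction M with
  | nil => simp
  | cons τ M ih =>
    rw [lsem_cons, lsem_cons,
      tsem_zeta i₀ m τ dbar (h0 τ List.mem_cons_self) (hd τ List.mem_cons_self) t,
      ih (fun σ hσ => h0 σ (List.mem_cons_of_mem τ hσ))
        (fun σ hσ => hd σ (List.mem_cons_of_mem τ hσ))]
    ring

lemma lsem_perm (m : ℝ) (b z : Fin n → ℝ) {L₁ L₂ : List (Tm n)} (h : L₁.Perm L₂) :
    lsem m b L₁ z = lsem m b L₂ z :=
  (h.map _).sum_eq

lemma lsem_single_pos (m : ℝ) (M : List (Tm n)) (dbar : ℕ) (hs : Sgn M)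
    (h0 : ∀ τ ∈ M, τ.e i₀ = 0)
    (hd : ∀ τ ∈ M, τ.c ≠ 0 → (∀ j, τ.e j = 0) → τ.d = dbar)
    (hex : ∃ τ ∈ M, τ.c ≠ 0 ∧ τ.e = fun _ => 0) :
    0 < (-1 : ℝ) ^ dbar * lsem m 0 M (Pi.single i₀ (1 : ℝ) : Fin n → ℝ) := by
  classical
  have key : ∀ τ ∈ M, 0 ≤ (-1 : ℝ) ^ dbar * tsem m 0 τ (Pi.single i₀ (1 : ℝ) : Fin n → ℝ) := by
    intro τ hτ
    rw [tsem_single i₀ m τ (h0 τ hτ)]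
    by_cases hE : ∀ j, τ.e j = 0
    · have h1 : ∏ j, ((Pi.single i₀ (1 : ℝ) : Fin n → ℝ) j) ^ τ.e j = 1 :=
        Finset.prod_eq_one fun j _ => by rw [hE j, pow_zero]
      rw [h1, mul_one]
      by_cases hc : τ.c = 0
      · rw [hc]; simp
      · rw [← hd τ hτ hc hE]
        exact hs τ hτ
    · push_neg at hE
      obtain ⟨j, hj⟩ := hE
      have hji : j ≠ i₀ := fun h => hj (h ▸ h0 τ hτ)
      have : ∏ k, ((Pi.single i₀ (1 : ℝ) : Fin n → ℝ) k) ^ τ.e k = 0 := by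
        apply Finset.prod_eq_zero (Finset.mem_univ j)
        rw [Pi.single_eq_of_ne hji]
        exact zero_pow hj
      rw [this]
      simp
  obtain ⟨τs, hτs, hcs, hes⟩ := hex
  have hperm := List.perm_cons_erase hτs
  rw [lsem_perm m 0 _ hperm, lsem_cons, mul_add]
  have hτsval : tsem m 0 τs (Pi.single i₀ (1 : ℝ) : Fin n → ℝ) = τs.c := by
    rw [tsem_single i₀ m τs (by rw [hes])]
    have h1 : ∏ j, ((Pi.single i₀ (1 : ℝ) : Fin n → ℝ) j) ^ τs.e j = 1 :=
      Finset.prod_eq_one fun j _ => by rw [show τs.e j = 0 by rw [hes], pow_zero]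
    rw [h1, mul_one]
  have hpos1 : 0 < (-1 : ℝ) ^ dbar * tsem m 0 τs (Pi.single i₀ (1 : ℝ) : Fin n → ℝ) := by
    rcases lt_or_eq_of_le (key τs hτs) with h | h
    · exact h
    · exfalso
      rw [hτsval] at h
      have : τs.c = 0 := by
        have hne : ((-1 : ℝ) ^ dbar) ≠ 0 := pow_ne_zero _ (by norm_num)
        rcases mul_eq_zero.mp h.symm with h' | h'
        · exact absurd h' hne
        · exact h'
      exact hcs this
  have hpos2 : 0 ≤ (-1 : ℝ) ^ dbar * lsem m 0 (M.erase τs) (Pi.single i₀ (1 : ℝ) : Fin n → ℝ) := by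
    unfold lsem
    rw [← List.sum_map_mul_left]
    apply List.sum_nonneg
    intro x hx
    obtain ⟨σ, hσ, rfl⟩ := List.mem_map.mp hx
    exact key σ (List.mem_of_mem_erase hσ)
  linarith

lemma slice_hasDerivAt (m : ℝ) (K : List (Tm n)) (t : ℝ) (ht : t ≠ 0) :
    HasDerivAt (fun s : ℝ => lsem m 0 K (s • (Pi.single i₀ (1 : ℝ) : Fin n → ℝ)))
      (lsem m 0 (Dl m i₀ K) (t • (Pi.single i₀ (1 : ℝ) : Fin n → ℝ))) t := by
  have hz : Sq (0 : Fin n → ℝ) (t • (Pi.single i₀ (1 : ℝ) : Fin n → ℝ)) ≠ 0 := by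
    rw [Sq_zeta]
    exact pow_ne_zero 2 ht
  have hd := differentiableAt_lsem (m := m) (b := (0 : Fin n → ℝ)) K hz
  have hζ : HasDerivAt (fun s : ℝ => s • (Pi.single i₀ (1 : ℝ) : Fin n → ℝ))
      (Pi.single i₀ (1 : ℝ) : Fin n → ℝ) t := by
    have := (hasDerivAt_id t).smul_const (Pi.single i₀ (1 : ℝ) : Fin n → ℝ)
    simpa using this
  have h := hd.hasFDerivAt.comp_hasDerivAt t hζ
  rw [fderiv_lsem_apply K i₀ hz] at h
  exact h

lemma slice_form (m : ℝ) (M : List (Tm n)) (dbar : ℕ) (h0 : ∀ τ ∈ M, τ.e i₀ = 0)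
    (hd : ∀ τ ∈ M, τ.c ≠ 0 → (∀ j, τ.e j = 0) → τ.d = dbar) (k : ℕ) :
    ∀ t : ℝ, 0 < t →
      lsem m 0 ((Dl m i₀)^[k] M) (t • (Pi.single i₀ (1 : ℝ) : Fin n → ℝ))
        = lsem m 0 M (Pi.single i₀ (1 : ℝ) : Fin n → ℝ)
            * (∏ j ∈ Finset.range k, (-2 * (m + (dbar : ℝ)) - j))
            * t ^ (-2 * (m + (dbar : ℝ)) - k) := by
  induction k with
  | zero =>
    intro t ht
    rw [Function.iterate_zero_apply, lsem_zeta i₀ m M dbar h0 hd t]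
    rw [Finset.range_zero, Finset.prod_empty, mul_one]
    congr 1
    rw [← Real.rpow_natCast t 2, ← Real.rpow_mul ht.le]
    congr 1
    push_cast
    ring
  | succ k ih =>
    intro t ht
    have hA := slice_hasDerivAt i₀ m ((Dl m i₀)^[k] M) t ht.ne'
    have hev : (fun s : ℝ => lsem m 0 ((Dl m i₀)^[k] M) (s • (Pi.single i₀ (1 : ℝ) : Fin n → ℝ)))
        =ᶠ[nhds t] (fun s : ℝ => lsem m 0 M (Pi.single i₀ (1 : ℝ) : Fin n → ℝ)
            * (∏ j ∈ Finset.range k, (-2 * (m + (dbar : ℝ)) - j))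
            * s ^ (-2 * (m + (dbar : ℝ)) - k)) :=
      Filter.eventuallyEq_of_mem (Ioi_mem_nhds ht) fun s hs => ih s hs
    have hB := hA.congr_of_eventuallyEq hev.symm
    have hC : HasDerivAt (fun s : ℝ => lsem m 0 M (Pi.single i₀ (1 : ℝ) : Fin n → ℝ)
            * (∏ j ∈ Finset.range k, (-2 * (m + (dbar : ℝ)) - j))
            * s ^ (-2 * (m + (dbar : ℝ)) - k))
        (lsem m 0 M (Pi.single i₀ (1 : ℝ) : Fin n → ℝ)
            * (∏ j ∈ Finset.range k, (-2 * (m + (dbar : ℝ)) - j))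
            * ((-2 * (m + (dbar : ℝ)) - k) * t ^ (-2 * (m + (dbar : ℝ)) - k - 1))) t :=
      (Real.hasDerivAt_rpow_const (Or.inl ht.ne')).const_mul _
    have hval := hB.unique hC
    rw [Function.iterate_succ_apply', hval, Finset.prod_range_succ]
    have : -2 * (m + (dbar : ℝ)) - (k : ℝ) - 1 = -2 * (m + (dbar : ℝ)) - ((k : ℕ) + 1 : ℕ) := by
      push_cast
      ring
    rw [this]
    push_cast
    ring

end Slice

end NKD

open NKD in
/-- Lemma 1: for `Ω(x,y) = (∑ᵢ (xᵢ-yᵢ)²)^{-(n-2)/2}` and any multi-index `α`,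
the Taylor coefficient at `x = 0` of the monomial `x^α` of the function
`x ↦ ∂^α_y Ω(x,y)|_{y = y₀}`, `y₀ = (1,0,…,0)`, is nonzero; equivalently (the coefficient
being `∂^α_x(⋅)(0)/α!`), the mixed derivative `∂^α_x ∂^α_y Ω` at `x = 0`, `y = y₀` is nonzero. -/
theorem newtonian_kernel_derivatives_generate (n : ℕ) (hn : 3 ≤ n) (α : Fin n → ℕ) :
    iterPderiv n α
      (fun x : Fin n → ℝ =>
        iterPderiv n α
          (fun y : Fin n → ℝ =>
            (∑ i : Fin n, (x i - y i) ^ 2) ^ (-(((n : ℝ) - 2) / 2)))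
          (Pi.single (⟨0, by omega⟩ : Fin n) 1))
      0 ≠ 0 := by
  classical
  set m : ℝ := ((n : ℝ) - 2) / 2 with hm_def
  have hm : 0 < m := by
    have h3 : (3 : ℝ) ≤ (n : ℝ) := by exact_mod_cast hn
    rw [hm_def]
    linarith
  have hi0 : 0 < n := by omega
  set i₀ : Fin n := ⟨0, hi0⟩ with hi₀
  set e₀ : Fin n → ℝ := Pi.single i₀ 1 with he₀
  set L₀ : List (Tm n) := [⟨1, fun _ => 0, 0⟩] with hL₀
  have hSq_symm : ∀ (a b : Fin n → ℝ), Sq a b = Sq b a := by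
    intro a b
    unfold Sq
    exact Finset.sum_congr rfl fun i _ => by ring
  -- inner representation (in `y`, with base point `x`)
  have hrep_inner : ∀ x : Fin n → ℝ, ∀ y, Sq x y ≠ 0 →
      (∑ i, (x i - y i) ^ 2) ^ (-(((n : ℝ) - 2) / 2)) = lsem m x L₀ y := by
    intro x y _
    rw [hL₀, lsem_cons, lsem_nil, add_zero]
    unfold tsem Sq
    simp only
    rw [Finset.prod_congr rfl (fun j (_ : j ∈ Finset.univ) => pow_zero (y j - x j)),
      Finset.prod_const_one,
      show (∑ i, (x i - y i) ^ 2) = ∑ i, (y i - x i) ^ 2 from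
        Finset.sum_congr rfl fun i _ => by ring]
    norm_num
    rw [hm_def]
  set L₁ : List (Tm n) := applyIter m α L₀ with hL₁
  -- representation of Φ in `x`, with base point `e₀`
  have hrep_Φ : ∀ x, Sq e₀ x ≠ 0 →
      (iterPderiv n α (fun y : Fin n → ℝ =>
        (∑ i : Fin n, (x i - y i) ^ 2) ^ (-(((n : ℝ) - 2) / 2))) e₀)
        = lsem m e₀ (flipL L₁) x := by
    intro x hx
    have h1 := rep_iterPderiv α (hrep_inner x) e₀ (by rw [hSq_symm]; exact hx)
    rw [h1, ← hL₁, ← lsem_flip_swapbase]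
  have hSq0e : Sq (0 : Fin n → ℝ) e₀ ≠ 0 := by
    rw [he₀, Sq_zero_single]
    norm_num
  have hSqe0 : Sq e₀ (0 : Fin n → ℝ) ≠ 0 := by
    rw [hSq_symm]
    exact hSq0e
  have hmain := rep_iterPderiv α hrep_Φ 0 hSqe0
  -- symbolic reorganization of the final list
  set wα : List (Fin n) := wordOf α with hwα
  set γ : Fin n → ℕ := fun i => if i = i₀ then 0 else α i with hγ
  set M : List (Tm n) := applyWord m (wordOf fun i => 2 * γ i) L₀ with hM
  have hstep2 : applyIter m α (flipL L₁) =
      flipL (scaleL ((-1) ^ wα.length) (applyWord m (wα ++ wα) L₀)) := by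
    rw [applyIter_eq_applyWord, ← hwα, applyWord_flip, applyWord_append, hL₁,
      applyIter_eq_applyWord, hwα]
  have hβword : ∀ j ∈ wordOf (fun i => 2 * γ i), j ≠ i₀ := by
    intro j hj
    obtain ⟨i, _, hj'⟩ := List.mem_flatMap.mp hj
    have hji : j = i := List.eq_of_mem_replicate hj'
    have hne : 2 * γ i ≠ 0 := by
      intro h0
      simp only [h0] at hj'
      simp at hj'
    subst hji
    intro h0
    rw [h0] at hne
    simp [hγ] at hne
  have hperm : (wα ++ wα).Perm (List.replicate (2 * α i₀) i₀ ++ wordOf (fun i => 2 * γ i)) := by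
    rw [List.perm_iff_count]
    intro j
    rw [List.count_append, List.count_append, hwα, count_wordOf, count_wordOf,
      List.count_replicate]
    by_cases hj : j = i₀
    · subst hj
      simp [hγ]
      omega
    · have : (i₀ == j) = false := by
        simp [beq_iff_eq]
        exact fun h => hj h.symm
      rw [this]
      simp [hγ, hj]
      omega
  -- invariants of M
  have hL₀e : ∀ τ ∈ L₀, τ.e i₀ = 0 := by
    intro τ hτ
    rw [hL₀, List.mem_singleton] at hτ
    subst hτ
    rfl
  have h0M : ∀ τ ∈ M, τ.e i₀ = 0 := e_zero_applyWord i₀ _ hβword hL₀e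
  have hBal0 : Bal 0 L₀ := by
    intro τ hτ _
    rw [hL₀, List.mem_singleton] at hτ
    subst hτ
    simp
  have hBalM : Bal (0 + (wordOf fun i => 2 * γ i).length) M := Bal_applyWord _ hBal0
  have hSgn0 : Sgn L₀ := by
    intro τ hτ
    rw [hL₀, List.mem_singleton] at hτ
    subst hτ
    norm_num
  have hSgnM : Sgn M := Sgn_applyWord hm _ hSgn0
  have hSurv0 : Surv L₀ := ⟨⟨1, fun _ => 0, 0⟩, by rw [hL₀]; exact List.mem_singleton_self _,
    one_ne_zero, rfl⟩
  have hSurvM : Surv M := by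
    rw [hM, ← applyIter_eq_applyWord]
    exact Surv_blocks hm γ (List.finRange n) hSurv0
  obtain ⟨τs, hτsM, hcs, hes⟩ := hSurvM
  have hd : ∀ τ ∈ M, τ.c ≠ 0 → (∀ j, τ.e j = 0) → τ.d = τs.d := by
    intro τ hτ hc hE
    have h1 := hBalM τ hτ hc
    have h2 := hBalM τs hτsM hcs
    rw [Finset.sum_eq_zero (fun j _ => hE j)] at h1
    rw [Finset.sum_eq_zero (fun j _ => show τs.e j = 0 by rw [hes])] at h2
    omega
  have hpos := lsem_single_pos i₀ m M τs.d hSgnM h0M hd ⟨τs, hτsM, hcs, hes⟩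
  have hform := slice_form i₀ m M τs.d h0M hd (2 * α i₀) 1 one_pos
  rw [one_smul] at hform
  have hC : lsem m 0 M (Pi.single i₀ (1 : ℝ) : Fin n → ℝ) ≠ 0 := by
    intro h0
    rw [h0, mul_zero] at hpos
    exact lt_irrefl 0 hpos
  have hprodne : (∏ j ∈ Finset.range (2 * α i₀), (-2 * (m + (τs.d : ℝ)) - j)) ≠ 0 := by
    rw [Finset.prod_ne_zero_iff]
    intro j _
    have : -2 * (m + (τs.d : ℝ)) - (j : ℝ) < 0 := by
      have h1 : (0 : ℝ) ≤ (τs.d : ℝ) := Nat.cast_nonneg _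
      have h2 : (0 : ℝ) ≤ (j : ℝ) := Nat.cast_nonneg _
      nlinarith
    exact ne_of_lt this
  have hone : (1 : ℝ) ^ (-2 * (m + (τs.d : ℝ)) - (2 * α i₀ : ℕ)) = 1 := Real.one_rpow _
  have hVne : lsem m 0 ((Dl m i₀)^[2 * α i₀] M) (Pi.single i₀ (1 : ℝ) : Fin n → ℝ) ≠ 0 := by
    rw [hform, hone, mul_one]
    exact mul_ne_zero hC hprodne
  -- the final chain
  have hstep6 : applyWord m (List.replicate (2 * α i₀) i₀ ++ wordOf (fun i => 2 * γ i)) L₀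
      = (Dl m i₀)^[2 * α i₀] M := by
    rw [applyWord_append, applyWord_replicate, hM]
  have hchain : iterPderiv n α (fun x : Fin n → ℝ =>
      iterPderiv n α (fun y : Fin n → ℝ =>
        (∑ i : Fin n, (x i - y i) ^ 2) ^ (-(((n : ℝ) - 2) / 2))) e₀) 0
      = (-1 : ℝ) ^ wα.length * lsem m 0 ((Dl m i₀)^[2 * α i₀] M)
          (Pi.single i₀ (1 : ℝ) : Fin n → ℝ) := by
    rw [hmain, hstep2, lsem_flip_swapbase, lsem_scaleL,
      lsem_applyWord_perm m 0 L₀ hperm e₀ hSq0e, hstep6, he₀]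
  have hfinal : iterPderiv n α (fun x : Fin n → ℝ =>
      iterPderiv n α (fun y : Fin n → ℝ =>
        (∑ i : Fin n, (x i - y i) ^ 2) ^ (-(((n : ℝ) - 2) / 2))) e₀) 0 ≠ 0 := by
    rw [hchain]
    exact mul_ne_zero (pow_ne_zero _ (by norm_num)) hVne
  exact hfinal
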